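/- Successive flat tetrahedrons of a local trajectory are connected via a common face containing a long edge (downward step): for every a ∈ ℤ⁴ and pairwise distinct i,j,k ∈ {1,2,3,4}, the intersection π(T(a;i,j,k)) ∩ π(T(a+eᵢ;j,k,i)) equals the projected triangle π(conv{a+eᵢ, a+eᵢ+eⱼ, a+eᵢ+eⱼ+e_k}); moreover this common face contains the edge from π(a+eᵢ) to π(a+eᵢ+eⱼ+e_k), which has length 1 (a long edge of both tetrahedrons). -/

import Mathlib

noncomputable section

/-- Ambient space ℝ⁴. -/
abbrev E4 := EuclideanSpace ℝ (Fin 4)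

/-- Standard basis vector eᵢ of ℝ⁴. -/
def ee4 (i : Fin 4) : E4 := EuclideanSpace.single i 1

/-- 𝟙 = e₁ + e₂ + e₃ + e₄. -/
def ones4 : E4 := ∑ i, ee4 i

/-- Orthogonal projection π onto the hyperplane H = {v ∈ ℝ⁴ : v₁+v₂+v₃+v₄ = 0},
    given by π(v) = v − ((v₁+v₂+v₃+v₄)/4)·𝟙. -/
def proj4 (v : E4) : E4 := v - ((∑ i, v i) / 4) • ones4

/-- A lattice point of ℤ⁴ viewed in ℝ⁴. -/
def toE4 (a : Fin 4 → ℤ) : E4 := WithLp.toLp 2 (fun n => (a n : ℝ))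

/-- Slant tetrahedron T(a;i,j,k) = conv{a, a+eᵢ, a+eᵢ+eⱼ, a+eᵢ+eⱼ+e_k}. -/
def slant4 (a : Fin 4 → ℤ) (i j k : Fin 4) : Set E4 :=
  convexHull ℝ {toE4 a, toE4 a + ee4 i, toE4 a + ee4 i + ee4 j,
    toE4 a + ee4 i + ee4 j + ee4 k}

/-- Flat tetrahedron: the image π(T(a;i,j,k)). -/
def flat4 (a : Fin 4 → ℤ) (i j k : Fin 4) : Set E4 := proj4 '' slant4 a i j k

lemma ee4_apply (i n : Fin 4) : ee4 i n = if n = i then 1 else 0 := by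
  simp [ee4, EuclideanSpace.single_apply]

lemma sum_ee4 (i : Fin 4) : ∑ n, ee4 i n = 1 := by
  simp [ee4_apply]

lemma ones4_apply (n : Fin 4) : ones4 n = 1 := by
  have : ones4 n = ∑ m, ee4 m n := by
    simp only [ones4]
    rw [Fin.sum_univ_four, Fin.sum_univ_four]
    simp [PiLp.add_apply]
  rw [this]
  simp [ee4_apply]

/-- proj4 as a linear map. -/
def projL : E4 →ₗ[ℝ] E4 where
  toFun := proj4
  map_add' u v := by
    simp only [proj4]
    have h : ∑ n, (u + v) n = (∑ n, u n) + ∑ n, v n := by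
      simp [PiLp.add_apply, Finset.sum_add_distrib]
    rw [h, add_div, add_smul]
    abel
  map_smul' c u := by
    simp only [proj4, RingHom.id_apply]
    have h : ∑ n, (c • u) n = c * ∑ n, u n := by
      simp [PiLp.smul_apply, smul_eq_mul, Finset.mul_sum]
    rw [h, smul_sub, mul_div_assoc, mul_smul]

lemma projL_apply (v : E4) : projL v = proj4 v := rfl

/-- The separating functional x ↦ xᵢ − x_l. -/
def phiL (i l : Fin 4) : E4 →ₗ[ℝ] ℝ where
  toFun x := x i - x l
  map_add' u v := by simp [PiLp.add_apply]; ring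
  map_smul' c u := by simp [PiLp.smul_apply, smul_eq_mul]; ring

set_option maxHeartbeats 1000000 in
/-- downward step: π(T(a;i,j,k)) ∩ π(T(a+eᵢ;j,k,i)) equals the
projected triangle π(conv{a+eᵢ, a+eᵢ+eⱼ, a+eᵢ+eⱼ+e_k}); this common face
contains the long edge from π(a+eᵢ) to π(a+eᵢ+eⱼ+e_k), of length 1. -/
theorem stmt13 (a : Fin 4 → ℤ) (i j k : Fin 4)
    (hij : i ≠ j) (hik : i ≠ k) (hjk : j ≠ k) :
    flat4 a i j k ∩ flat4 (a + Pi.single i 1) j k i =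
      proj4 '' convexHull ℝ
        {toE4 a + ee4 i, toE4 a + ee4 i + ee4 j, toE4 a + ee4 i + ee4 j + ee4 k} ∧
    segment ℝ (proj4 (toE4 a + ee4 i)) (proj4 (toE4 a + ee4 i + ee4 j + ee4 k)) ⊆
      proj4 '' convexHull ℝ
        {toE4 a + ee4 i, toE4 a + ee4 i + ee4 j, toE4 a + ee4 i + ee4 j + ee4 k} ∧
    dist (proj4 (toE4 a + ee4 i)) (proj4 (toE4 a + ee4 i + ee4 j + ee4 k)) = 1 := by
  -- the fourth index
  have hex : ∀ i j k : Fin 4, i ≠ j → i ≠ k → j ≠ k →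
      ∃ l : Fin 4, l ≠ i ∧ l ≠ j ∧ l ≠ k := by decide
  obtain ⟨l, hli, hlj, hlk⟩ := hex i j k hij hik hjk
  -- points
  set p0 := toE4 a with hp0
  set p1 := toE4 a + ee4 i with hp1
  set p2 := toE4 a + ee4 i + ee4 j with hp2
  set p3 := toE4 a + ee4 i + ee4 j + ee4 k with hp3
  set p4 := toE4 a + ee4 i + ee4 j + ee4 k + ee4 i with hp4
  set q0 := proj4 p0 with hq0d
  set q1 := proj4 p1 with hq1d
  set q2 := proj4 p2 with hq2d
  set q3 := proj4 p3 with hq3d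
  set q4 := proj4 p4 with hq4d
  have htoE : toE4 (a + Pi.single i 1) = toE4 a + ee4 i := by
    ext n
    have : (toE4 a + ee4 i) n = (a n : ℝ) + ee4 i n := by
      simp [PiLp.add_apply, toE4]
    rw [this]
    by_cases h : n = i <;>
      simp [toE4, ee4_apply, Pi.single_apply, h]
  -- the two flat tetrahedra as convex hulls of projected vertices
  have himg : ∀ S : Set E4, proj4 '' convexHull ℝ S = convexHull ℝ (proj4 '' S) := by
    intro S
    exact projL.image_convexHull S
  have hA : flat4 a i j k = convexHull ℝ {q0, q1, q2, q3} := by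
    rw [flat4, slant4, himg]
    congr 1
    simp only [Set.image_insert_eq, Set.image_singleton]
    rfl
  have hB : flat4 (a + Pi.single i 1) j k i = convexHull ℝ {q1, q2, q3, q4} := by
    rw [flat4, slant4, himg, htoE]
    congr 1
    simp only [Set.image_insert_eq, Set.image_singleton]
    rfl
  -- the functional φ
  set φ := phiL i l with hφd
  have hφones : φ ones4 = 0 := by
    simp [hφd, phiL, ones4_apply]
  have hφproj : ∀ v : E4, φ (proj4 v) = φ v := by
    intro v
    simp only [proj4, map_sub, map_smul, hφones, smul_eq_mul, mul_zero, sub_zero]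
  have hφee : ∀ m : Fin 4, m ≠ l → φ (ee4 m) = if m = i then 1 else 0 := by
    intro m hm
    simp only [hφd, phiL, LinearMap.coe_mk, AddHom.coe_mk]
    rw [ee4_apply, ee4_apply]
    by_cases h : m = i
    · subst h; simp [hli, Ne.symm hm]
    · simp [h, Ne.symm h, Ne.symm hm]
  have hφi : φ (ee4 i) = 1 := by rw [hφee i (Ne.symm hli)]; simp
  have hφj : φ (ee4 j) = 0 := by rw [hφee j (Ne.symm hlj)]; simp [Ne.symm hij]
  have hφk : φ (ee4 k) = 0 := by rw [hφee k (Ne.symm hlk)]; simp [Ne.symm hik]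
  set c := φ (toE4 a) with hcd
  have hq0 : φ q0 = c := by rw [hq0d, hφproj]
  have hq1 : φ q1 = c + 1 := by rw [hq1d, hφproj, hp1, map_add, hφi]
  have hq2 : φ q2 = c + 1 := by
    rw [hq2d, hφproj, hp2, map_add, map_add, hφi, hφj]; ring
  have hq3 : φ q3 = c + 1 := by
    rw [hq3d, hφproj, hp3, map_add, map_add, map_add, hφi, hφj, hφk]; ring
  have hq4 : φ q4 = c + 2 := by
    rw [hq4d, hφproj, hp4, map_add, map_add, map_add, map_add, hφi, hφj, hφk]; ring
  -- the common triangle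
  set T : Set E4 := convexHull ℝ {q1, q2, q3} with hTd
  have hTphi : ∀ z ∈ T, φ z = c + 1 := by
    intro z hz
    have hconv : Convex ℝ {w : E4 | φ w = c + 1} := convex_hyperplane φ.isLinear _
    have hsub : ({q1, q2, q3} : Set E4) ⊆ {w : E4 | φ w = c + 1} := by
      rintro w (rfl | rfl | rfl)
      · exact hq1
      · exact hq2
      · exact hq3
    exact convexHull_min hsub hconv hz
  have hTim : proj4 '' convexHull ℝ ({p1, p2, p3} : Set E4) = T := by
    rw [himg, hTd]
    congr 1
    simp only [Set.image_insert_eq, Set.image_singleton]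
    rfl
  have hB4 : ({q1, q2, q3, q4} : Set E4) = insert q4 {q1, q2, q3} := by
    ext x; simp; tauto
  -- main set equality
  refine ⟨?_, ?_, ?_⟩
  · rw [hA, hB, hTim]
    apply Set.Subset.antisymm
    · rintro x ⟨hxA, hxB⟩
      rw [convexHull_insert ⟨q1, by simp⟩, mem_convexJoin] at hxA
      rw [hB4, convexHull_insert ⟨q1, by simp⟩, mem_convexJoin] at hxB
      obtain ⟨u, hu, z1, hz1, hseg1⟩ := hxA
      obtain ⟨w, hw, z2, hz2, hseg2⟩ := hxB
      rw [Set.mem_singleton_iff] at hu hw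
      subst hu; subst hw
      obtain ⟨α, β, hα, hβ, hαβ, hx1⟩ := hseg1
      obtain ⟨γ, δ, hγ, hδ, hγδ, hx2⟩ := hseg2
      have hφ1 : φ x = c + 1 - α := by
        rw [← hx1, map_add, map_smul, map_smul, hq0, hTphi z1 hz1,
          smul_eq_mul, smul_eq_mul]
        linear_combination (c + 1) * hαβ
      have hφ2 : φ x = c + 1 + γ := by
        rw [← hx2, map_add, map_smul, map_smul, hq4, hTphi z2 hz2,
          smul_eq_mul, smul_eq_mul]
        linear_combination (c + 1) * hγδ
      have hα0 : α = 0 := by linarith [hφ1, hφ2]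
      have hβ1 : β = 1 := by linarith
      rw [← hx1, hα0, hβ1]
      simpa using hz1
    · intro x hx
      constructor
      · exact convexHull_mono (by intro w hw; simp at hw ⊢; tauto) hx
      · exact convexHull_mono (by intro w hw; simp at hw ⊢; tauto) hx
  -- the long edge is in the triangle
  · rw [hTim, hTd]
    exact segment_subset_convexHull (by simp) (by simp)
  -- its length is 1
  · have hsum1 : ∑ n, p1 n = (∑ n, (a n : ℝ)) + 1 := by
      rw [hp1]
      simp only [PiLp.add_apply]
      rw [Finset.sum_add_distrib, sum_ee4]
      simp [toE4]
    have hsum3 : ∑ n, p3 n = (∑ n, (a n : ℝ)) + 3 := by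
      rw [hp3]
      simp only [PiLp.add_apply]
      rw [Finset.sum_add_distrib, Finset.sum_add_distrib, Finset.sum_add_distrib,
        sum_ee4, sum_ee4, sum_ee4]
      simp [toE4]; ring
    have hkey : ∀ n, q1 n - q3 n = 1/2 - (ee4 j n + ee4 k n) := by
      intro n
      rw [hq1d, hq3d]
      simp only [proj4, PiLp.sub_apply, PiLp.smul_apply, smul_eq_mul, hsum1, hsum3,
        ones4_apply]
      have h1 : p1 n = (a n : ℝ) + ee4 i n := by simp [hp1, PiLp.add_apply, toE4]
      have h3 : p3 n = (a n : ℝ) + ee4 i n + ee4 j n + ee4 k n := by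
        simp [hp3, PiLp.add_apply, toE4]
      rw [h1, h3]; ring
    have hterm : ∀ n : Fin 4, dist (q1 n) (q3 n) ^ 2 = 1/4 := by
      intro n
      rw [Real.dist_eq, sq_abs, hkey n]
      rcases eq_or_ne n j with rfl | hnj
      · rw [ee4_apply, ee4_apply]
        simp [hjk]; norm_num
      · rcases eq_or_ne n k with rfl | hnk
        · rw [ee4_apply, ee4_apply]
          simp [hnj]; norm_num
        · rw [ee4_apply, ee4_apply]
          simp [hnj, hnk]; norm_num
    rw [EuclideanSpace.dist_eq]
    have : ∑ n, dist (q1 n) (q3 n) ^ 2 = 1 := by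
      rw [Finset.sum_congr rfl fun n _ => hterm n]
      simp
    rw [this, Real.sqrt_one]
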